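/- For p = 2 and f = 1 + X, the number of nonzero coefficients of (1+X)^n over ℤ/2ℤ satisfies r(2m) = 3·r(m), where r(n) = Σ_{i=0}^{n−1} q(i) and q(i) is the number of nonzero coefficients of (1+X)^i mod 2. Consequently r(2^k) = 3^k. -/

import Mathlib

open Polynomial Finset

lemma supp_expand (P : (ZMod 2)[X]) :
    (expand (ZMod 2) 2 P).support = P.support.image (fun a => 2 * a) := by
  ext n
  simp only [mem_support_iff, Finset.mem_image, coeff_expand (by norm_num : 0 < 2)]
  constructor
  · intro h
    by_cases hd : 2 ∣ n
    · rw [if_pos hd] at h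
      exact ⟨n / 2, h, by omega⟩
    · rw [if_neg hd] at h; exact absurd rfl h
  · rintro ⟨a, ha, rfl⟩
    rw [if_pos ⟨a, rfl⟩, Nat.mul_div_cancel_left a (by norm_num)]
    exact ha

lemma supp_X_mul_expand (P : (ZMod 2)[X]) :
    (X * expand (ZMod 2) 2 P).support = P.support.image (fun a => 2 * a + 1) := by
  ext n
  simp only [mem_support_iff, Finset.mem_image]
  cases n with
  | zero => simp
  | succ m =>
    rw [coeff_X_mul, coeff_expand (by norm_num : 0 < 2)]
    constructor
    · intro h
      by_cases hd : 2 ∣ m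
      · rw [if_pos hd] at h
        exact ⟨m / 2, h, by omega⟩
      · rw [if_neg hd] at h; exact absurd rfl h
    · rintro ⟨a, ha, hn⟩
      obtain rfl : m = 2 * a := by omega
      rw [if_pos ⟨a, rfl⟩, Nat.mul_div_cancel_left a (by norm_num)]
      exact ha

lemma pow_two_eq (i : ℕ) :
    ((1 + X : (ZMod 2)[X]) ^ (2 * i)) = expand (ZMod 2) 2 ((1 + X) ^ i) := by
  rw [pow_mul, map_pow]
  have h1 : ((1 + X : (ZMod 2)[X]) ^ 2) = 1 + X ^ 2 := by
    rw [add_pow_char]; simp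
  have h2 : expand (ZMod 2) 2 (1 + X : (ZMod 2)[X]) = 1 + X ^ 2 := by
    simp [map_add]
  rw [show ((1 + X : (ZMod 2)[X]) ^ 2) = expand (ZMod 2) 2 (1 + X) from h1.trans h2.symm]

lemma q_even (i : ℕ) :
    (((1 + X : (ZMod 2)[X]) ^ (2 * i)).support.card)
      = ((1 + X : (ZMod 2)[X]) ^ i).support.card := by
  rw [pow_two_eq, supp_expand, Finset.card_image_of_injective _ (fun a b h => by omega)]

lemma q_odd (i : ℕ) :
    (((1 + X : (ZMod 2)[X]) ^ (2 * i + 1)).support.card)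
      = 2 * ((1 + X : (ZMod 2)[X]) ^ i).support.card := by
  set P : (ZMod 2)[X] := ((1 + X : (ZMod 2)[X]) ^ i)
  have h1 : ((1 + X : (ZMod 2)[X]) ^ (2 * i + 1))
      = expand (ZMod 2) 2 P + X * expand (ZMod 2) 2 P := by
    rw [pow_succ, pow_two_eq]; ring
  have hsupp : ((expand (ZMod 2) 2 P + X * expand (ZMod 2) 2 P).support) =
      (expand (ZMod 2) 2 P).support ∪ (X * expand (ZMod 2) 2 P).support := by
    apply subset_antisymm (support_add)
    intro n hn
    rw [Finset.mem_union] at hn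
    rw [mem_support_iff, coeff_add]
    rcases hn with hn | hn
    · have h2 : (X * expand (ZMod 2) 2 P).coeff n = 0 := by
        by_contra h
        have h3 := mem_support_iff.mpr h
        rw [supp_X_mul_expand] at h3
        rw [supp_expand] at hn
        simp only [Finset.mem_image] at h3 hn
        obtain ⟨a, _, ha⟩ := h3; obtain ⟨b, _, hb⟩ := hn; omega
      rw [h2, add_zero]
      rw [supp_expand] at hn
      exact mem_support_iff.mp (by rw [supp_expand]; exact hn)
    · have h2 : (expand (ZMod 2) 2 P).coeff n = 0 := by
        by_contra h
        have h3 := mem_support_iff.mpr h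
        rw [supp_expand] at h3
        rw [supp_X_mul_expand] at hn
        simp only [Finset.mem_image] at h3 hn
        obtain ⟨a, _, ha⟩ := h3; obtain ⟨b, _, hb⟩ := hn; omega
      rw [h2, zero_add]
      exact mem_support_iff.mp (by rw [supp_X_mul_expand]; rwa [supp_X_mul_expand] at hn)
  have hdisj : Disjoint (expand (ZMod 2) 2 P).support (X * expand (ZMod 2) 2 P).support := by
    rw [supp_expand, supp_X_mul_expand, Finset.disjoint_left]
    simp only [Finset.mem_image]
    rintro n ⟨a, _, rfl⟩ ⟨b, _, hb⟩
    omega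
  rw [h1, hsupp, Finset.card_union_of_disjoint hdisj, supp_expand, supp_X_mul_expand,
    Finset.card_image_of_injective _ (fun a b h => by omega),
    Finset.card_image_of_injective _ (fun a b h => by omega)]
  ring

theorem nonzero_count_doubling
    (q : ℕ → ℕ) (hq : ∀ i, q i = ((1 + X : Polynomial (ZMod 2)) ^ i).support.card)
    (r : ℕ → ℕ) (hr : ∀ n, r n = ∑ i ∈ range n, q i) :
    (∀ m : ℕ, r (2 * m) = 3 * r m) ∧ (∀ k : ℕ, r (2 ^ k) = 3 ^ k) := by
  have hq3 : ∀ i, q (2 * i) + q (2 * i + 1) = 3 * q i := by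
    intro i
    rw [hq, hq, hq, q_even, q_odd]; ring
  have key : ∀ m : ℕ, r (2 * m) = 3 * r m := by
    intro m
    rw [hr, hr]
    induction m with
    | zero => simp
    | succ n ih =>
      rw [show 2 * (n + 1) = (2 * n + 1) + 1 by ring, Finset.sum_range_succ,
        Finset.sum_range_succ, Finset.sum_range_succ, ih]
      have := hq3 n
      ring_nf
      ring_nf at this ih ⊢
      omega
  refine ⟨key, fun k => ?_⟩
  induction k with
  | zero =>
    rw [pow_zero, pow_zero, hr, Finset.sum_range_one, hq, pow_zero,
      show (1 : (ZMod 2)[X]) = C 1 from rfl, support_C (by norm_num : (1 : ZMod 2) ≠ 0)]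
    simp
  | succ n ih =>
    rw [pow_succ, pow_succ, mul_comm ((2:ℕ)^n) 2, key, ih, mul_comm]
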